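/- For t > 1 define u(t,x) = x/(t−1) if 0 ≤ x ≤ (t−1)² and u(t,x) = t−1 if x ≥ (t−1)². Then: (a) at every point (t,x) with t > 1, x > 0 and x ≠ (t−1)², the function u is differentiable in t and x and satisfies ∂_t u(t,x) + 2·u(t,x)·∂_x u(t,x) = ∫₀^x (∂_x u(t,y))² dy; (b) for every t > 1, ∫₀^∞ (∂_x u(t,x))² dx = 1; (c) sup_{x ≥ 0} |u(t,x)| = t−1, so u(t,·) converges uniformly to 0 as t → 1⁺. In particular, this nonzero solution and the identically zero solution both emanate continuously from the zero state at time t = 1, while the nonzero one has constant energy 1. -/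

import Mathlib

open MeasureTheory Set Real

section Aux

variable {u : ℝ → ℝ → ℝ}

lemma aux_dx_lt (hu : ∀ t x : ℝ, u t x = if x ≤ (t - 1) ^ 2 then x / (t - 1) else t - 1) {t y : ℝ} (hy : y < (t - 1) ^ 2) :
    HasDerivAt (fun z => u t z) (1 / (t - 1)) y := by
  have h1 : HasDerivAt (fun z : ℝ => z / (t - 1)) (1 / (t - 1)) y := by
    simpa using (hasDerivAt_id y).div_const (t - 1)
  refine h1.congr_of_eventuallyEq ?_
  filter_upwards [Iio_mem_nhds hy] with z hz
  rw [hu, if_pos hz.le]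

lemma aux_dx_gt (hu : ∀ t x : ℝ, u t x = if x ≤ (t - 1) ^ 2 then x / (t - 1) else t - 1) {t y : ℝ} (hy : (t - 1) ^ 2 < y) :
    HasDerivAt (fun z => u t z) 0 y := by
  refine (hasDerivAt_const y (t - 1)).congr_of_eventuallyEq ?_
  filter_upwards [Ioi_mem_nhds hy] with z hz
  rw [hu, if_neg (not_le.mpr hz)]

lemma aux_dt_lt (hu : ∀ t x : ℝ, u t x = if x ≤ (t - 1) ^ 2 then x / (t - 1) else t - 1) {t x : ℝ} (ht : 1 < t) (hx : x < (t - 1) ^ 2) :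
    HasDerivAt (fun s => u s x) (-x / (t - 1) ^ 2) t := by
  have hne : t - 1 ≠ 0 := by intro h; nlinarith [h]
  have h1 : HasDerivAt (fun s : ℝ => x * (s - 1)⁻¹) (x * (-1 / (t - 1) ^ 2)) t := by
    have := (((hasDerivAt_id t).sub_const 1).inv hne).const_mul x
    simpa using this
  have h2 : HasDerivAt (fun s => u s x) (x * (-1 / (t - 1) ^ 2)) t := by
    refine h1.congr_of_eventuallyEq ?_
    have hcont : ContinuousAt (fun s : ℝ => (s - 1) ^ 2) t := by fun_prop
    filter_upwards [hcont (Ioi_mem_nhds hx)] with s hs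
    rw [hu, if_pos (le_of_lt hs), div_eq_mul_inv, mul_comm]
  convert h2 using 1; ring

lemma aux_dt_gt (hu : ∀ t x : ℝ, u t x = if x ≤ (t - 1) ^ 2 then x / (t - 1) else t - 1) {t x : ℝ} (hx : (t - 1) ^ 2 < x) :
    HasDerivAt (fun s => u s x) 1 t := by
  have h1 : HasDerivAt (fun s : ℝ => s - 1) 1 t := (hasDerivAt_id t).sub_const 1
  refine h1.congr_of_eventuallyEq ?_
  have hcont : ContinuousAt (fun s : ℝ => (s - 1) ^ 2) t := by fun_prop
  filter_upwards [hcont (Iio_mem_nhds hx)] with s hs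
  rw [hu, if_neg (not_le.mpr hs)]

end Aux

/-- Example 1 of the paper, energy-conserving continuation past blow-up: for
`t > 1` the function `u(t,x) = x/(t−1)` for `0 ≤ x ≤ (t−1)²`, `u(t,x) = t−1`
for `x ≥ (t−1)²` solves `u_t + 2u·u_x = ∫₀^x u_x² dy` away from the kink, has
constant energy `∫₀^∞ u_x² dx = 1`, and `sup_{x≥0}|u(t,x)| = t−1 → 0` as
`t → 1⁺`; it thus emanates continuously from the zero state at `t = 1`, just
like the identically zero solution, illustrating non-uniqueness after gradient
blow-up. -/
theorem stmt16 (u : ℝ → ℝ → ℝ)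
    (hu : ∀ t x : ℝ, u t x = if x ≤ (t - 1) ^ 2 then x / (t - 1) else t - 1) :
    (∀ t x : ℝ, 1 < t → 0 < x → x ≠ (t - 1) ^ 2 →
      DifferentiableAt ℝ (fun s => u s x) t ∧
      DifferentiableAt ℝ (fun z => u t z) x ∧
      deriv (fun s => u s x) t + 2 * u t x * deriv (fun z => u t z) x =
        ∫ y in (0:ℝ)..x, (deriv (fun z => u t z) y) ^ 2) ∧
    (∀ t : ℝ, 1 < t →
      ∫ x in Set.Ioi (0:ℝ), (deriv (fun z => u t z) x) ^ 2 = 1) ∧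
    (∀ t : ℝ, 1 < t →
      sSup {r : ℝ | ∃ x : ℝ, 0 ≤ x ∧ r = |u t x|} = t - 1) ∧
    Filter.Tendsto (fun t => sSup {r : ℝ | ∃ x : ℝ, 0 ≤ x ∧ r = |u t x|})
      (nhdsWithin 1 (Set.Ioi 1)) (nhds 0) := by
  have hc : ∀ t : ℝ, 1 < t →
      sSup {r : ℝ | ∃ x : ℝ, 0 ≤ x ∧ r = |u t x|} = t - 1 := by
    intro t ht
    have ht1 : (0:ℝ) < t - 1 := by linarith
    have hne : t - 1 ≠ 0 := ne_of_gt ht1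
    have hub : ∀ r ∈ {r : ℝ | ∃ x : ℝ, 0 ≤ x ∧ r = |u t x|}, r ≤ t - 1 := by
      rintro r ⟨x, hx0, rfl⟩
      rw [hu]
      split_ifs with h
      · rw [abs_of_nonneg (div_nonneg hx0 ht1.le)]
        rw [div_le_iff₀ ht1]
        nlinarith
      · rw [abs_of_nonneg ht1.le]
    have hmem : t - 1 ∈ {r : ℝ | ∃ x : ℝ, 0 ≤ x ∧ r = |u t x|} := by
      refine ⟨(t - 1) ^ 2, by positivity, ?_⟩
      rw [hu, if_pos le_rfl, sq, mul_div_assoc, div_self hne, mul_one,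
        abs_of_nonneg ht1.le]
    exact le_antisymm (Real.sSup_le hub ht1.le) (le_csSup ⟨t - 1, hub⟩ hmem)
  refine ⟨?_, ?_, hc, ?_⟩
  · -- part (a)
    intro t x ht hx hxne
    have ht1 : (0:ℝ) < t - 1 := by linarith
    have hne : t - 1 ≠ 0 := ne_of_gt ht1
    rcases lt_or_gt_of_ne hxne with hlt | hgt
    · have hdt := aux_dt_lt hu ht hlt
      have hdx := aux_dx_lt (u := u) hu hlt
      refine ⟨hdt.differentiableAt, hdx.differentiableAt, ?_⟩
      rw [hdt.deriv, hdx.deriv, hu, if_pos hlt.le]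
      have hint : (∫ y in (0:ℝ)..x, (deriv (fun z => u t z) y) ^ 2)
          = ∫ y in (0:ℝ)..x, (1 / (t - 1)) ^ 2 := by
        apply intervalIntegral.integral_congr
        intro y hy
        rw [uIcc_of_le hx.le] at hy
        have hy2 : y < (t - 1) ^ 2 := lt_of_le_of_lt hy.2 hlt
        show deriv (fun z => u t z) y ^ 2 = (1 / (t - 1)) ^ 2
        rw [(aux_dx_lt (u := u) hu hy2).deriv]
      rw [hint, intervalIntegral.integral_const, smul_eq_mul]
      field_simp
      ring
    · have hdt := aux_dt_gt (u := u) hu hgt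
      have hdx := aux_dx_gt (u := u) hu hgt
      refine ⟨hdt.differentiableAt, hdx.differentiableAt, ?_⟩
      rw [hdt.deriv, hdx.deriv, hu, if_neg (not_le.mpr hgt)]
      set a : ℝ := (t - 1) ^ 2 with ha
      have ha0 : 0 < a := by positivity
      have haea : ∀ᵐ y : ℝ, y ≠ a := by
        rw [ae_iff]
        simp only [not_not, setOf_eq_eq_singleton]
        exact measure_singleton a
      have key1 : ∀ᵐ y : ℝ, y ∈ Set.uIoc (0:ℝ) a →
          (deriv (fun z => u t z) y) ^ 2 = (1 / (t - 1)) ^ 2 := by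
        filter_upwards [haea] with y hy hmem
        rw [uIoc_of_le ha0.le] at hmem
        have : y < a := lt_of_le_of_ne hmem.2 hy
        rw [(aux_dx_lt (u := u) hu this).deriv]
      have key2 : ∀ᵐ y : ℝ, y ∈ Set.uIoc a x →
          (deriv (fun z => u t z) y) ^ 2 = 0 := by
        filter_upwards with y hmem
        rw [uIoc_of_le hgt.le] at hmem
        rw [(aux_dx_gt (u := u) hu hmem.1).deriv]
        norm_num
      have hInt1 : IntervalIntegrable (fun y => (deriv (fun z => u t z) y) ^ 2)
          volume 0 a := by
        apply (intervalIntegrable_const (c := (1 / (t - 1)) ^ 2)).congr_ae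
        rw [Filter.eventuallyEq_iff_exists_mem]
        exact ⟨_, (ae_restrict_iff' measurableSet_uIoc).mpr key1,
          fun y hy => (hy).symm⟩
      have hInt2 : IntervalIntegrable (fun y => (deriv (fun z => u t z) y) ^ 2)
          volume a x := by
        apply (intervalIntegrable_const (c := (0:ℝ))).congr_ae
        rw [Filter.eventuallyEq_iff_exists_mem]
        exact ⟨_, (ae_restrict_iff' measurableSet_uIoc).mpr key2,
          fun y hy => (hy).symm⟩
      rw [← intervalIntegral.integral_add_adjacent_intervals hInt1 hInt2,
        intervalIntegral.integral_congr_ae key1,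
        intervalIntegral.integral_congr_ae key2,
        intervalIntegral.integral_const, intervalIntegral.integral_const]
      simp only [smul_eq_mul, mul_zero, sub_zero, add_zero, ha]
      field_simp
  · -- part (b)
    intro t ht
    have ht1 : (0:ℝ) < t - 1 := by linarith
    set a : ℝ := (t - 1) ^ 2 with ha
    have ha0 : 0 < a := by positivity
    have haea : ∀ᵐ y : ℝ, y ≠ a := by
      rw [ae_iff]
      simp only [not_not, setOf_eq_eq_singleton]
      exact measure_singleton a
    have key1 : ∀ᵐ y : ℝ, y ∈ Ioc (0:ℝ) a →
        (deriv (fun z => u t z) y) ^ 2 = (1 / (t - 1)) ^ 2 := by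
      filter_upwards [haea] with y hy hmem
      have : y < a := lt_of_le_of_ne hmem.2 hy
      rw [(aux_dx_lt (u := u) hu this).deriv]
    have key2 : ∀ᵐ y : ℝ, y ∈ Ioi a →
        (deriv (fun z => u t z) y) ^ 2 = 0 := by
      filter_upwards with y hmem
      rw [(aux_dx_gt (u := u) hu hmem).deriv]
      norm_num
    have hi1 : IntegrableOn (fun y => (deriv (fun z => u t z) y) ^ 2)
        (Ioc 0 a) volume := by
      apply Integrable.congr (g := fun y => (deriv (fun z => u t z) y) ^ 2)
        (f := fun _ : ℝ => (1 / (t - 1)) ^ 2)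
      · exact (integrableOn_const_iff).mpr (Or.inr measure_Ioc_lt_top)
      · have e1 : (fun y => (deriv (fun z => u t z) y) ^ 2)
            =ᵐ[volume.restrict (Ioc (0:ℝ) a)] fun _ => (1 / (t - 1)) ^ 2 :=
          (ae_restrict_iff' measurableSet_Ioc).mpr key1
        exact e1.symm
    have hi2 : IntegrableOn (fun y => (deriv (fun z => u t z) y) ^ 2)
        (Ioi a) volume := by
      apply Integrable.congr (f := fun _ : ℝ => (0:ℝ))
      · exact integrable_zero ℝ ℝ (volume.restrict (Ioi a))
      · have e2 : (fun y => (deriv (fun z => u t z) y) ^ 2)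
            =ᵐ[volume.restrict (Ioi a)] fun _ => (0:ℝ) :=
          (ae_restrict_iff' measurableSet_Ioi).mpr key2
        exact e2.symm
    have hsplit : Ioc (0:ℝ) a ∪ Ioi a = Ioi (0:ℝ) := Ioc_union_Ioi_eq_Ioi ha0.le
    rw [← hsplit, setIntegral_union (Ioc_disjoint_Ioi le_rfl) measurableSet_Ioi hi1 hi2,
      setIntegral_congr_ae measurableSet_Ioc key1,
      setIntegral_congr_ae measurableSet_Ioi key2,
      setIntegral_const, integral_zero, add_zero, Real.volume_real_Ioc_of_le (by linarith : (0:ℝ) ≤ a)]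
    simp only [sub_zero, smul_eq_mul, ha]
    field_simp
  · -- part (d)
    have h2 : Filter.Tendsto (fun t : ℝ => t - 1)
        (nhdsWithin 1 (Set.Ioi 1)) (nhds 0) := by
      have h3 : Filter.Tendsto (fun t : ℝ => t - 1) (nhds 1) (nhds 0) := by
        have := ((continuous_id (X := ℝ)).sub (continuous_const (y := (1:ℝ)))).tendsto (1:ℝ)
        simpa [Pi.sub_def] using this
      exact h3.mono_left nhdsWithin_le_nhds
    refine h2.congr' ?_
    filter_upwards [self_mem_nhdsWithin] with t ht
    exact (hc t ht).symm
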